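/- Matrix product combined estimate (Lemma A.2 e): Let H be a d×d real symmetric matrix with λ_H := λ_max(−H) > 0 whose sum of positive eigenvalues is at most D₄, and let η_{o+1}, …, η_n be positive numbers with η_i‖H‖ < 1/2 and η_i ≤ η_o ≤ δ₀² for all i ∈ {o+1, …, n}, for some δ₀ > 0 and η_o > 0. Define A_{j:k} := (I − η_{j+1}H)⋯(I − η_k H) (with A_{k:k} = I). If η_{o+1:n} := Σ_{i=o+1}^{n} η_i ≥ (2/λ_H) log((16D₄ + 40)/λ_H), then Σ_{j=o+1}^{n} [δ₀² η_j · tr(A_{j:n} H A_{j:n}) + η_j² · λ_max(A_{j:n} H A_{j:n})] ≤ −4 δ₀² η_{o+1:n}. -/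

import Mathlib

open Matrix

/-- The matrix product `A_{j:k} = (I − η_{j+1}H)(I − η_{j+2}H)⋯(I − η_k H)`
(with `A_{k:k} = I`); all factors are polynomials in `H`, hence commute. -/
noncomputable def AprodM {d : ℕ} (H : Matrix (Fin d) (Fin d) ℝ) (η : ℕ → ℝ) (j k : ℕ) :
    Matrix (Fin d) (Fin d) ℝ :=
  ((List.range (k - j)).map fun i => (1 : Matrix (Fin d) (Fin d) ℝ) - η (j + 1 + i) • H).prod


lemma myConjMul {d : ℕ} (U A B : Matrix (Fin d) (Fin d) ℝ) (hU' : star U * U = 1) :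
    (U * A * star U) * (U * B * star U) = U * (A * B) * star U := by
  calc (U * A * star U) * (U * B * star U) = U * A * (star U * U) * B * star U := by
        noncomm_ring
    _ = U * (A * B) * star U := by rw [hU']; noncomm_ring

lemma AprodM_eq {d : ℕ} (H : Matrix (Fin d) (Fin d) ℝ) (hH : H.IsHermitian) (η : ℕ → ℝ)
    (j n : ℕ) :
    AprodM H η j n = (hH.eigenvectorUnitary : Matrix (Fin d) (Fin d) ℝ)
      * diagonal (fun k => ∏ i ∈ Finset.range (n - j), (1 - η (j + 1 + i) * hH.eigenvalues k))
      * star (hH.eigenvectorUnitary : Matrix (Fin d) (Fin d) ℝ) := by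
  have hU : (hH.eigenvectorUnitary : Matrix (Fin d) (Fin d) ℝ) * star (hH.eigenvectorUnitary : Matrix (Fin d) (Fin d) ℝ) = 1 :=
    (Matrix.mem_unitaryGroup_iff).mp (hH.eigenvectorUnitary).2
  have hU' : star (hH.eigenvectorUnitary : Matrix (Fin d) (Fin d) ℝ) * (hH.eigenvectorUnitary : Matrix (Fin d) (Fin d) ℝ) = 1 :=
    (Matrix.mem_unitaryGroup_iff').mp (hH.eigenvectorUnitary).2
  have hspec : H = (hH.eigenvectorUnitary : Matrix (Fin d) (Fin d) ℝ) * diagonal hH.eigenvalues * star (hH.eigenvectorUnitary : Matrix (Fin d) (Fin d) ℝ) := by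
    have := hH.spectral_theorem
    rwa [RCLike.ofReal_real_eq_id, Function.id_comp] at this
  unfold AprodM
  induction (n - j) with
  | zero =>
      simp only [List.range_zero, List.map_nil, List.prod_nil, Finset.range_zero,
        Finset.prod_empty, diagonal_one, mul_one, hU]
  | succ m ih =>
      rw [List.range_succ, List.map_append, List.prod_append, ih]
      have hfac : (1 : Matrix (Fin d) (Fin d) ℝ) - η (j + 1 + m) • H
          = (hH.eigenvectorUnitary : Matrix (Fin d) (Fin d) ℝ) * diagonal (fun k => 1 - η (j + 1 + m) * hH.eigenvalues k) * star (hH.eigenvectorUnitary : Matrix (Fin d) (Fin d) ℝ) := by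
        have h1 : (1 : Matrix (Fin d) (Fin d) ℝ) = (hH.eigenvectorUnitary : Matrix (Fin d) (Fin d) ℝ) * diagonal (fun _ => (1:ℝ)) * star (hH.eigenvectorUnitary : Matrix (Fin d) (Fin d) ℝ) := by
          rw [diagonal_one, mul_one, hU]
        calc (1 : Matrix (Fin d) (Fin d) ℝ) - η (j + 1 + m) • H
            = (hH.eigenvectorUnitary : Matrix (Fin d) (Fin d) ℝ) * diagonal (fun _ => (1:ℝ)) * star (hH.eigenvectorUnitary : Matrix (Fin d) (Fin d) ℝ)
              - η (j + 1 + m) • ((hH.eigenvectorUnitary : Matrix (Fin d) (Fin d) ℝ) * diagonal hH.eigenvalues * star (hH.eigenvectorUnitary : Matrix (Fin d) (Fin d) ℝ)) := by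
              rw [← h1, ← hspec]
          _ = (hH.eigenvectorUnitary : Matrix (Fin d) (Fin d) ℝ) * (diagonal (fun _ => (1:ℝ)) - η (j + 1 + m) • diagonal hH.eigenvalues) * star (hH.eigenvectorUnitary : Matrix (Fin d) (Fin d) ℝ) := by
              rw [mul_sub, sub_mul, mul_smul_comm, smul_mul_assoc]
          _ = _ := by
              rw [← diagonal_smul, ← diagonal_sub]
              congr 1
      simp only [List.map_cons, List.map_nil, List.prod_cons, List.prod_nil, mul_one, hfac]
      rw [myConjMul _ _ _ hU', diagonal_mul_diagonal]
      have hfun : (fun i => (∏ i_1 ∈ Finset.range m, (1 - η (j + 1 + i_1) * hH.eigenvalues i)) * (1 - η (j + 1 + m) * hH.eigenvalues i))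
          = fun k => ∏ i ∈ Finset.range (m + 1), (1 - η (j + 1 + i) * hH.eigenvalues k) := by
        funext k
        rw [Finset.prod_range_succ]
      rw [hfun]

lemma AHA_eq {d : ℕ} (H : Matrix (Fin d) (Fin d) ℝ) (hH : H.IsHermitian) (η : ℕ → ℝ)
    (j n : ℕ) :
    AprodM H η j n * H * AprodM H η j n = (hH.eigenvectorUnitary : Matrix (Fin d) (Fin d) ℝ)
      * diagonal (fun k => hH.eigenvalues k *
          (∏ i ∈ Finset.range (n - j), (1 - η (j + 1 + i) * hH.eigenvalues k)) ^ 2)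
      * star (hH.eigenvectorUnitary : Matrix (Fin d) (Fin d) ℝ) := by
  have hdiag : star (hH.eigenvectorUnitary : Matrix (Fin d) (Fin d) ℝ) * H * (hH.eigenvectorUnitary : Matrix (Fin d) (Fin d) ℝ) = diagonal hH.eigenvalues := by
    have := hH.conjStarAlgAut_star_eigenvectorUnitary
    rwa [RCLike.ofReal_real_eq_id, Function.id_comp, Unitary.conjStarAlgAut_apply, Unitary.coe_star, star_star] at this
  rw [AprodM_eq H hH η j n]
  calc ((hH.eigenvectorUnitary : Matrix (Fin d) (Fin d) ℝ) * diagonal (fun k => ∏ i ∈ Finset.range (n - j), (1 - η (j + 1 + i) * hH.eigenvalues k)) * star (hH.eigenvectorUnitary : Matrix (Fin d) (Fin d) ℝ)) * H *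
      ((hH.eigenvectorUnitary : Matrix (Fin d) (Fin d) ℝ) * diagonal (fun k => ∏ i ∈ Finset.range (n - j), (1 - η (j + 1 + i) * hH.eigenvalues k)) * star (hH.eigenvectorUnitary : Matrix (Fin d) (Fin d) ℝ))
      = (hH.eigenvectorUnitary : Matrix (Fin d) (Fin d) ℝ) * (diagonal (fun k => ∏ i ∈ Finset.range (n - j), (1 - η (j + 1 + i) * hH.eigenvalues k)) * (star (hH.eigenvectorUnitary : Matrix (Fin d) (Fin d) ℝ) * H * (hH.eigenvectorUnitary : Matrix (Fin d) (Fin d) ℝ)) * diagonal (fun k => ∏ i ∈ Finset.range (n - j), (1 - η (j + 1 + i) * hH.eigenvalues k))) * star (hH.eigenvectorUnitary : Matrix (Fin d) (Fin d) ℝ) := by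
        noncomm_ring
    _ = _ := by
        rw [hdiag, diagonal_mul_diagonal, diagonal_mul_diagonal]
        have hfun : (fun i => (∏ i_1 ∈ Finset.range (n - j), (1 - η (j + 1 + i_1) * hH.eigenvalues i)) * hH.eigenvalues i * ∏ i_1 ∈ Finset.range (n - j), (1 - η (j + 1 + i_1) * hH.eigenvalues i))
            = fun k => hH.eigenvalues k * (∏ i ∈ Finset.range (n - j), (1 - η (j + 1 + i) * hH.eigenvalues k)) ^ 2 := by
          funext k
          ring
        rw [hfun]

lemma trace_conj {d : ℕ} (U : Matrix (Fin d) (Fin d) ℝ) (hU' : star U * U = 1)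
    (g : Fin d → ℝ) :
    Matrix.trace (U * diagonal g * star U) = ∑ k, g k := by
  rw [trace_mul_cycle, hU', one_mul, trace_diagonal]

lemma rayleigh_bound {d : ℕ} (U : Matrix (Fin d) (Fin d) ℝ) (hU : U * star U = 1)
    (g : Fin d → ℝ) (B : ℝ) (hB : ∀ k, g k ≤ B) (hB0 : 0 ≤ B)
    (v : Fin d → ℝ) (hv : ∑ i, v i ^ 2 = 1) :
    v ⬝ᵥ ((U * diagonal g * star U) *ᵥ v) ≤ B := by
  have hsU : star U = Uᵀ := by
    rw [Matrix.star_eq_conjTranspose, conjTranspose_eq_transpose_of_trivial]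
  set w : Fin d → ℝ := Uᵀ *ᵥ v with hw
  have h1 : v ⬝ᵥ ((U * diagonal g * star U) *ᵥ v) = ∑ k, g k * w k ^ 2 := by
    rw [hsU, ← mulVec_mulVec, ← mulVec_mulVec, dotProduct_mulVec, ← mulVec_transpose]
    simp only [dotProduct, mulVec_diagonal, hw]
    exact Finset.sum_congr rfl fun k _ => by ring
  have h2 : ∑ k, w k ^ 2 = 1 := by
    have hUU : U * Uᵀ = 1 := by rw [← hsU]; exact hU
    have : ∑ k, w k ^ 2 = w ⬝ᵥ w := by
      simp [dotProduct, pow_two]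
    rw [this, hw, dotProduct_mulVec, ← mulVec_transpose, transpose_transpose,
      mulVec_mulVec, hUU, one_mulVec]
    simpa [dotProduct, pow_two] using hv
  rw [h1]
  calc ∑ k, g k * w k ^ 2 ≤ ∑ k, B * w k ^ 2 :=
        Finset.sum_le_sum fun k _ => mul_le_mul_of_nonneg_right (hB k) (sq_nonneg _)
    _ = B := by rw [← Finset.mul_sum, h2, mul_one]

lemma exp_le_one_add_sq {x : ℝ} (hx0 : 0 ≤ x) (hx : x < 1 / 2) :
    Real.exp x ≤ (1 + x) ^ 2 := by
  have h1 : 1 - x ≤ Real.exp (-x) := by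
    have := Real.add_one_le_exp (-x); linarith
  have h2 : Real.exp x * Real.exp (-x) = 1 := by
    rw [← Real.exp_add]; simp
  have h3 : Real.exp x * (1 - x) ≤ 1 := by
    calc Real.exp x * (1 - x) ≤ Real.exp x * Real.exp (-x) :=
          mul_le_mul_of_nonneg_left h1 (Real.exp_pos x).le
      _ = 1 := h2
  nlinarith [Real.exp_pos x, sq_nonneg x, mul_nonneg (mul_nonneg hx0 hx0) hx0]

lemma exp_sub_one_le {t : ℝ} (ht : 0 ≤ t) : Real.exp t - 1 ≤ t * Real.exp t := by
  have h1 : 1 - t ≤ Real.exp (-t) := by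
    have := Real.add_one_le_exp (-t); linarith
  have h2 : Real.exp t * Real.exp (-t) = 1 := by rw [← Real.exp_add]; simp
  nlinarith [Real.exp_pos t]

lemma key_scalar (lam D : ℝ) (hlam : 0 < lam) (hD : 0 ≤ D)
    (η : ℕ → ℝ) (o n : ℕ) (hon : o < n)
    (hηpos : ∀ i ∈ Finset.Icc (o + 1) n, 0 < η i)
    (hηlam : ∀ i ∈ Finset.Icc (o + 1) n, η i * lam < 1 / 2)
    (hsum : 2 / lam * Real.log ((16 * D + 40) / lam) ≤ ∑ i ∈ Finset.Icc (o + 1) n, η i) :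
    (2 * D + 4) * ∑ i ∈ Finset.Icc (o + 1) n, η i
      ≤ lam * ∑ j ∈ Finset.Icc (o + 1) n,
          η j * Real.exp (lam * ∑ i ∈ Finset.Icc (j + 1) n, η i) := by
  set S := ∑ i ∈ Finset.Icc (o + 1) n, η i with hS
  -- partial sums are nonneg
  have hsub : ∀ j ∈ Finset.Icc (o + 1) n, Finset.Icc (j + 1) n ⊆ Finset.Icc (o + 1) n := by
    intro j hj i hi
    simp only [Finset.mem_Icc] at *
    omega
  have hSj0 : ∀ j ∈ Finset.Icc (o + 1) n, 0 ≤ ∑ i ∈ Finset.Icc (j + 1) n, η i := by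
    intro j hj
    exact Finset.sum_nonneg fun i hi => (hηpos i (hsub j hj hi)).le
  have hSpos : 0 < S := by
    rw [hS]
    apply Finset.sum_pos hηpos
    rw [Finset.nonempty_Icc]; omega
  rcases le_or_gt (2 * D + 4) lam with hcase | hcase
  · -- easy case
    have h1 : S ≤ ∑ j ∈ Finset.Icc (o + 1) n,
        η j * Real.exp (lam * ∑ i ∈ Finset.Icc (j + 1) n, η i) := by
      rw [hS]
      apply Finset.sum_le_sum
      intro j hj
      have h2 : (1:ℝ) ≤ Real.exp (lam * ∑ i ∈ Finset.Icc (j + 1) n, η i) := by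
        rw [← Real.exp_zero]
        apply Real.exp_le_exp.2
        exact mul_nonneg hlam.le (hSj0 j hj)
      nlinarith [hηpos j hj]
    calc (2 * D + 4) * S ≤ lam * S := by nlinarith
      _ ≤ _ := by
          apply mul_le_mul_of_nonneg_left h1 hlam.le
  · -- telescoping case
    set F : ℕ → ℝ := fun j => Real.exp (lam * ∑ i ∈ Finset.Icc (j + 1) n, η i) with hF
    have hstep : ∀ j ∈ Finset.Icc (o + 1) n,
        F (j - 1) - F j ≤ Real.exp (1/2) * (lam * (η j * F j)) := by
      intro j hj
      simp only [Finset.mem_Icc] at hj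
      have hj1 : j - 1 + 1 = j := by omega
      have hins : Finset.Icc j n = insert j (Finset.Icc (j + 1) n) :=
        (Finset.insert_Icc_add_one_left_eq_Icc hj.2).symm
      have hFj1 : F (j - 1) = Real.exp (lam * η j) * F j := by
        rw [hF]
        simp only [hj1]
        rw [hins, Finset.sum_insert (by simp), mul_add, Real.exp_add]
      have hηj := hηpos j (Finset.mem_Icc.mpr hj)
      have hηlamj := hηlam j (Finset.mem_Icc.mpr hj)
      have hx : 0 ≤ lam * η j := by positivity
      have h3 : Real.exp (lam * η j) - 1 ≤ (lam * η j) * Real.exp (lam * η j) :=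
        exp_sub_one_le hx
      have h4 : Real.exp (lam * η j) ≤ Real.exp (1/2) :=
        Real.exp_le_exp.2 (by nlinarith)
      have hFpos : 0 < F j := Real.exp_pos _
      rw [hFj1]
      calc Real.exp (lam * η j) * F j - F j = (Real.exp (lam * η j) - 1) * F j := by ring
        _ ≤ ((lam * η j) * Real.exp (lam * η j)) * F j := by
            apply mul_le_mul_of_nonneg_right h3 hFpos.le
        _ ≤ ((lam * η j) * Real.exp (1/2)) * F j := by
            apply mul_le_mul_of_nonneg_right _ hFpos.le
            apply mul_le_mul_of_nonneg_left h4 hx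
        _ = Real.exp (1/2) * (lam * (η j * F j)) := by ring
    -- telescoping sum
    have htel : ∑ j ∈ Finset.Icc (o + 1) n, (F (j - 1) - F j) = Real.exp (lam * S) - 1 := by
      have hconv : ∑ j ∈ Finset.Icc (o + 1) n, (F (j - 1) - F j)
          = ∑ i ∈ Finset.range (n - o), (F (o + i) - F (o + 1 + i)) := by
        rw [← Finset.Ico_add_one_right_eq_Icc, Finset.sum_Ico_eq_sum_range]
        have : n + 1 - (o + 1) = n - o := by omega
        rw [this]
        apply Finset.sum_congr rfl
        intro i _
        congr 2
        omega
      rw [hconv]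
      have h1 : ∑ i ∈ Finset.range (n - o), (F (o + i) - F (o + 1 + i))
          = F (o + 0) - F (o + (n - o)) := by
        have h2 : ∀ i ∈ Finset.range (n - o),
            F (o + i) - F (o + 1 + i) = F (o + i) - F (o + (i + 1)) := by
          intro i _
          congr 2
          omega
        rw [Finset.sum_congr rfl h2, Finset.sum_range_sub' (fun i => F (o + i))]
      rw [h1]
      have h0 : F (o + 0) = Real.exp (lam * S) := by simp only [hF, Nat.add_zero, hS]
      have hn : F (o + (n - o)) = 1 := by
        have h3 : o + (n - o) = n := by omega
        have h4 : Finset.Icc (n + 1) n = ∅ := Finset.Icc_eq_empty (by omega)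
        simp only [hF, h3, h4, Finset.sum_empty, mul_zero, Real.exp_zero]
      rw [h0, hn]
    have hsum2 : Real.exp (lam * S) - 1
        ≤ Real.exp (1/2) * (lam * ∑ j ∈ Finset.Icc (o + 1) n, η j * F j) := by
      rw [← htel, Finset.mul_sum, Finset.mul_sum]
      exact Finset.sum_le_sum hstep
    -- lower bound on exp(lam*S)
    have hR8 : (8:ℝ) ≤ (16 * D + 40) / lam := by
      rw [le_div_iff₀ hlam]; nlinarith
    have hRpos : (0:ℝ) < (16 * D + 40) / lam := by positivity
    have hhalf : Real.log ((16 * D + 40) / lam) ≤ lam * S / 2 := by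
      have h7 := mul_le_mul_of_nonneg_left hsum (by positivity : (0:ℝ) ≤ lam / 2)
      have h8 : lam / 2 * (2 / lam * Real.log ((16 * D + 40) / lam))
          = Real.log ((16 * D + 40) / lam) := by field_simp
      rw [h8] at h7
      linarith
    have hexphalf : (16 * D + 40) / lam ≤ Real.exp (lam * S / 2) := by
      calc (16 * D + 40) / lam = Real.exp (Real.log ((16 * D + 40) / lam)) :=
            (Real.exp_log hRpos).symm
        _ ≤ _ := Real.exp_le_exp.2 hhalf
    have hexp2 : (16 * D + 40) / lam * (1 + lam * S / 2) ≤ Real.exp (lam * S) := by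
      have h5 : (1:ℝ) + lam * S / 2 ≤ Real.exp (lam * S / 2) := by
        have := Real.add_one_le_exp (lam * S / 2); linarith
      calc (16 * D + 40) / lam * (1 + lam * S / 2)
          ≤ Real.exp (lam * S / 2) * Real.exp (lam * S / 2) := by
            apply mul_le_mul hexphalf h5 (by positivity) (Real.exp_pos _).le
        _ = Real.exp (lam * S) := by rw [← Real.exp_add]; ring_nf
    have hkey : Real.exp (1/2) * ((2 * D + 4) * S) ≤ Real.exp (lam * S) - 1 := by
      have hRlamS : (16 * D + 40) / lam * (lam * S / 2) = (8 * D + 20) * S := by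
        field_simp; ring
      have hehalf : Real.exp (1/2) < 2 := by
        have h6 : Real.exp (1/2) * Real.exp (1/2) = Real.exp 1 := by
          rw [← Real.exp_add]; norm_num
        nlinarith [Real.exp_one_lt_d9, Real.exp_pos (1/2:ℝ)]
      have h9 : (0:ℝ) ≤ (2 - Real.exp (1/2)) * ((2 * D + 4) * S) :=
        mul_nonneg (by linarith) (mul_nonneg (by linarith) hSpos.le)
      nlinarith [hexp2, hR8, hSpos, hRlamS, mul_nonneg hD hSpos.le]
    -- combine
    have hepos : (0:ℝ) < Real.exp (1/2) := Real.exp_pos _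
    exact le_of_mul_le_mul_left (le_trans hkey hsum2) hepos

lemma prod_conv (η : ℕ → ℝ) (x : ℝ) (j n : ℕ) :
    ∏ i ∈ Finset.range (n - j), (1 - η (j + 1 + i) * x)
      = ∏ i ∈ Finset.Icc (j + 1) n, (1 - η i * x) := by
  rw [← Finset.Ico_add_one_right_eq_Icc, Finset.prod_Ico_eq_prod_range]
  have h : n + 1 - (j + 1) = n - j := by omega
  rw [h]

/-- Matrix product combined estimate (Lemma A.2 e): if `H` is real symmetric with
`λ_H = λ_max(−H) > 0`, the sum of the positive eigenvalues of `H` is at most `D₄`,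
`η_i‖H‖ < 1/2` and `η_i ≤ η_o ≤ δ₀²`, and
`η_{o+1:n} ≥ (2/λ_H)log((16D₄+40)/λ_H)`, then
`Σ_{j=o+1}^n [δ₀²η_j tr(A_{j:n}HA_{j:n}) + η_j² λ_max(A_{j:n}HA_{j:n})] ≤ −4δ₀²η_{o+1:n}`.
Here `λ_max(A_{j:n}HA_{j:n})` is characterized as the largest Rayleigh quotient. -/
theorem matrix_prod_combined_estimate
    (d : ℕ) (hd : 0 < d) (H : Matrix (Fin d) (Fin d) ℝ) (hH : H.IsHermitian)
    (lamH D₄ : ℝ)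
    (hlamH : IsGreatest (Set.range fun i => -hH.eigenvalues i) lamH) (hlamHpos : 0 < lamH)
    (hD₄ : ∑ i, max (hH.eigenvalues i) 0 ≤ D₄)
    (η : ℕ → ℝ) (o n : ℕ) (hon : o < n)
    (δ₀ ηo : ℝ) (hδ₀ : 0 < δ₀) (hηo : 0 < ηo)
    (hηpos : ∀ i ∈ Finset.Icc (o + 1) n, 0 < η i)
    -- `η_i ‖H‖ < 1/2`, where `‖H‖ = max_k |λ_k(H)|` is the spectral norm
    (hηH : ∀ i ∈ Finset.Icc (o + 1) n, ∀ k, η i * |hH.eigenvalues k| < 1 / 2)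
    (hηstep : ∀ i ∈ Finset.Icc (o + 1) n, η i ≤ ηo) (hηoδ : ηo ≤ δ₀ ^ 2)
    (hsum : 2 / lamH * Real.log ((16 * D₄ + 40) / lamH) ≤ ∑ i ∈ Finset.Icc (o + 1) n, η i)
    -- `lmax j = λ_max(A_{j:n} H A_{j:n})`, via the Rayleigh-quotient characterization
    (lmax : ℕ → ℝ)
    (hlmax : ∀ j ∈ Finset.Icc (o + 1) n,
      IsGreatest {x : ℝ | ∃ v : Fin d → ℝ, ∑ i, v i ^ 2 = 1 ∧
        x = v ⬝ᵥ ((AprodM H η j n * H * AprodM H η j n) *ᵥ v)} (lmax j)) :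
    ∑ j ∈ Finset.Icc (o + 1) n,
        (δ₀ ^ 2 * η j * Matrix.trace (AprodM H η j n * H * AprodM H η j n)
          + η j ^ 2 * lmax j)
      ≤ -4 * δ₀ ^ 2 * ∑ i ∈ Finset.Icc (o + 1) n, η i := by
  obtain ⟨k0, hk0⟩ := hlamH.1
  have hk0' : -hH.eigenvalues k0 = lamH := hk0
  have hμk0 : hH.eigenvalues k0 = -lamH := by linarith
  have habsk0 : |hH.eigenvalues k0| = lamH := by rw [hμk0, abs_neg, abs_of_pos hlamHpos]
  have hD40 : 0 ≤ D₄ := le_trans (Finset.sum_nonneg fun k _ => le_max_right _ _) hD₄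
  have hU : (hH.eigenvectorUnitary : Matrix (Fin d) (Fin d) ℝ)
      * star (hH.eigenvectorUnitary : Matrix (Fin d) (Fin d) ℝ) = 1 :=
    (Matrix.mem_unitaryGroup_iff).mp (hH.eigenvectorUnitary).2
  have hU' : star (hH.eigenvectorUnitary : Matrix (Fin d) (Fin d) ℝ)
      * (hH.eigenvectorUnitary : Matrix (Fin d) (Fin d) ℝ) = 1 :=
    (Matrix.mem_unitaryGroup_iff').mp (hH.eigenvectorUnitary).2
  have hAHA : ∀ j, AprodM H η j n * H * AprodM H η j n
      = (hH.eigenvectorUnitary : Matrix (Fin d) (Fin d) ℝ)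
        * Matrix.diagonal (fun k => hH.eigenvalues k
            * (∏ i ∈ Finset.Icc (j + 1) n, (1 - η i * hH.eigenvalues k)) ^ 2)
        * star (hH.eigenvectorUnitary : Matrix (Fin d) (Fin d) ℝ) := by
    intro j
    rw [AHA_eq H hH η j n]
    have hfe : (fun k => hH.eigenvalues k
          * (∏ i ∈ Finset.range (n - j), (1 - η (j + 1 + i) * hH.eigenvalues k)) ^ 2)
        = (fun k => hH.eigenvalues k
          * (∏ i ∈ Finset.Icc (j + 1) n, (1 - η i * hH.eigenvalues k)) ^ 2) := by
      funext k
      rw [prod_conv]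
    rw [hfe]
  -- per-index bound by positive part
  have hgmax : ∀ j ∈ Finset.Icc (o + 1) n, ∀ k,
      hH.eigenvalues k * (∏ i ∈ Finset.Icc (j + 1) n, (1 - η i * hH.eigenvalues k)) ^ 2
        ≤ max (hH.eigenvalues k) 0 := by
    intro j hj k
    simp only [Finset.mem_Icc] at hj
    rcases le_or_gt (hH.eigenvalues k) 0 with hk | hk
    · exact le_trans (mul_nonpos_of_nonpos_of_nonneg hk (sq_nonneg _)) (le_max_right _ _)
    · have hprod : ∏ i ∈ Finset.Icc (j + 1) n, (1 - η i * hH.eigenvalues k) ≤ 1 := by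
        apply Finset.prod_le_one
        · intro i hi
          have himem : i ∈ Finset.Icc (o + 1) n := by
            simp only [Finset.mem_Icc] at hi ⊢; omega
          have h1 := hηH i himem k
          rw [abs_of_pos hk] at h1
          linarith
        · intro i hi
          have himem : i ∈ Finset.Icc (o + 1) n := by
            simp only [Finset.mem_Icc] at hi ⊢; omega
          have := mul_pos (hηpos i himem) hk
          linarith
      have hprod0 : 0 ≤ ∏ i ∈ Finset.Icc (j + 1) n, (1 - η i * hH.eigenvalues k) := by
        apply Finset.prod_nonneg
        intro i hi
        have himem : i ∈ Finset.Icc (o + 1) n := by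
          simp only [Finset.mem_Icc] at hi ⊢; omega
        have h1 := hηH i himem k
        rw [abs_of_pos hk] at h1
        linarith
      have hsq : (∏ i ∈ Finset.Icc (j + 1) n, (1 - η i * hH.eigenvalues k)) ^ 2 ≤ 1 := by
        nlinarith
      calc hH.eigenvalues k * (∏ i ∈ Finset.Icc (j + 1) n, (1 - η i * hH.eigenvalues k)) ^ 2
          ≤ hH.eigenvalues k * 1 := mul_le_mul_of_nonneg_left hsq hk.le
        _ = hH.eigenvalues k := mul_one _
        _ ≤ max (hH.eigenvalues k) 0 := le_max_left _ _
  -- the negative eigenvalue contribution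
  have hgk0 : ∀ j ∈ Finset.Icc (o + 1) n,
      hH.eigenvalues k0 * (∏ i ∈ Finset.Icc (j + 1) n, (1 - η i * hH.eigenvalues k0)) ^ 2
        ≤ -lamH * Real.exp (lamH * ∑ i ∈ Finset.Icc (j + 1) n, η i) := by
    intro j hj
    simp only [Finset.mem_Icc] at hj
    have hmem : ∀ i ∈ Finset.Icc (j + 1) n, i ∈ Finset.Icc (o + 1) n := by
      intro i hi; simp only [Finset.mem_Icc] at hi ⊢; omega
    have hfac : ∀ i ∈ Finset.Icc (j + 1) n,
        Real.exp (η i * lamH) ≤ (1 + η i * lamH) ^ 2 := by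
      intro i hi
      have h1 := hηH i (hmem i hi) k0
      rw [habsk0] at h1
      exact exp_le_one_add_sq (mul_nonneg (hηpos i (hmem i hi)).le hlamHpos.le) h1
    have hexp : Real.exp (lamH * ∑ i ∈ Finset.Icc (j + 1) n, η i)
        ≤ (∏ i ∈ Finset.Icc (j + 1) n, (1 + η i * lamH)) ^ 2 := by
      have h2 : Real.exp (lamH * ∑ i ∈ Finset.Icc (j + 1) n, η i)
          = ∏ i ∈ Finset.Icc (j + 1) n, Real.exp (η i * lamH) := by
        rw [← Real.exp_sum, Finset.mul_sum]
        congr 1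
        exact Finset.sum_congr rfl fun i _ => by ring
      rw [h2, ← Finset.prod_pow]
      apply Finset.prod_le_prod
      · intro i _; exact (Real.exp_pos _).le
      · exact hfac
    have hprodeq : ∏ i ∈ Finset.Icc (j + 1) n, (1 - η i * hH.eigenvalues k0)
        = ∏ i ∈ Finset.Icc (j + 1) n, (1 + η i * lamH) := by
      apply Finset.prod_congr rfl
      intro i _
      rw [hμk0]; ring
    rw [hprodeq, hμk0]
    nlinarith [mul_le_mul_of_nonneg_left hexp hlamHpos.le]
  -- trace bound
  have htrace : ∀ j ∈ Finset.Icc (o + 1) n,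
      Matrix.trace (AprodM H η j n * H * AprodM H η j n)
        ≤ D₄ - lamH * Real.exp (lamH * ∑ i ∈ Finset.Icc (j + 1) n, η i) := by
    intro j hj
    rw [hAHA j, trace_conj _ hU' _]
    have hsplit : ∑ k, hH.eigenvalues k
          * (∏ i ∈ Finset.Icc (j + 1) n, (1 - η i * hH.eigenvalues k)) ^ 2
        = hH.eigenvalues k0
            * (∏ i ∈ Finset.Icc (j + 1) n, (1 - η i * hH.eigenvalues k0)) ^ 2
          + ∑ k ∈ Finset.univ.erase k0, hH.eigenvalues k
              * (∏ i ∈ Finset.Icc (j + 1) n, (1 - η i * hH.eigenvalues k)) ^ 2 :=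
      (Finset.add_sum_erase _ _ (Finset.mem_univ k0)).symm
    have herase : ∑ k ∈ Finset.univ.erase k0, hH.eigenvalues k
          * (∏ i ∈ Finset.Icc (j + 1) n, (1 - η i * hH.eigenvalues k)) ^ 2 ≤ D₄ := by
      calc ∑ k ∈ Finset.univ.erase k0, hH.eigenvalues k
            * (∏ i ∈ Finset.Icc (j + 1) n, (1 - η i * hH.eigenvalues k)) ^ 2
          ≤ ∑ k ∈ Finset.univ.erase k0, max (hH.eigenvalues k) 0 :=
            Finset.sum_le_sum fun k _ => hgmax j hj k
        _ ≤ ∑ k, max (hH.eigenvalues k) 0 :=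
            Finset.sum_le_sum_of_subset_of_nonneg (Finset.erase_subset _ _)
              (fun k _ _ => le_max_right _ _)
        _ ≤ D₄ := hD₄
    have := hgk0 j hj
    rw [hsplit]
    linarith
  -- lmax bound
  have hlmaxD : ∀ j ∈ Finset.Icc (o + 1) n, lmax j ≤ D₄ := by
    intro j hj
    obtain ⟨v, hv, heq⟩ := (hlmax j hj).1
    rw [heq, hAHA j]
    apply rayleigh_bound _ hU _ D₄ _ hD40 v hv
    intro k
    calc hH.eigenvalues k * (∏ i ∈ Finset.Icc (j + 1) n, (1 - η i * hH.eigenvalues k)) ^ 2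
        ≤ max (hH.eigenvalues k) 0 := hgmax j hj k
      _ ≤ ∑ k, max (hH.eigenvalues k) 0 :=
          Finset.single_le_sum (f := fun k => max (hH.eigenvalues k) 0)
            (fun k _ => le_max_right _ _) (Finset.mem_univ k)
      _ ≤ D₄ := hD₄
  -- termwise bound
  have hterm : ∀ j ∈ Finset.Icc (o + 1) n,
      δ₀ ^ 2 * η j * Matrix.trace (AprodM H η j n * H * AprodM H η j n) + η j ^ 2 * lmax j
        ≤ (2 * D₄ * δ₀ ^ 2) * η j
          - (δ₀ ^ 2 * lamH) * (η j * Real.exp (lamH * ∑ i ∈ Finset.Icc (j + 1) n, η i)) := by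
    intro j hj
    have hηj := hηpos j hj
    have hηjs := hηstep j hj
    have h1 : δ₀ ^ 2 * η j * Matrix.trace (AprodM H η j n * H * AprodM H η j n)
        ≤ δ₀ ^ 2 * η j * (D₄ - lamH * Real.exp (lamH * ∑ i ∈ Finset.Icc (j + 1) n, η i)) := by
      apply mul_le_mul_of_nonneg_left (htrace j hj)
      positivity
    have h2 : η j ^ 2 * lmax j ≤ δ₀ ^ 2 * η j * D₄ := by
      calc η j ^ 2 * lmax j ≤ η j ^ 2 * D₄ :=
            mul_le_mul_of_nonneg_left (hlmaxD j hj) (sq_nonneg _)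
        _ ≤ δ₀ ^ 2 * η j * D₄ := by
            nlinarith [mul_le_mul_of_nonneg_right
              (mul_le_mul_of_nonneg_left (le_trans hηjs hηoδ) hηj.le) hD40]
    nlinarith [h1, h2]
  -- sum up
  have hks := key_scalar lamH D₄ hlamHpos hD40 η o n hon hηpos
    (fun i hi => by have := hηH i hi k0; rwa [habsk0] at this) hsum
  calc ∑ j ∈ Finset.Icc (o + 1) n,
        (δ₀ ^ 2 * η j * Matrix.trace (AprodM H η j n * H * AprodM H η j n)
          + η j ^ 2 * lmax j)
      ≤ ∑ j ∈ Finset.Icc (o + 1) n,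
          ((2 * D₄ * δ₀ ^ 2) * η j
            - (δ₀ ^ 2 * lamH) * (η j * Real.exp (lamH * ∑ i ∈ Finset.Icc (j + 1) n, η i))) :=
        Finset.sum_le_sum hterm
    _ = (2 * D₄ * δ₀ ^ 2) * ∑ j ∈ Finset.Icc (o + 1) n, η j
        - δ₀ ^ 2 * (lamH * ∑ j ∈ Finset.Icc (o + 1) n,
            η j * Real.exp (lamH * ∑ i ∈ Finset.Icc (j + 1) n, η i)) := by
        rw [Finset.sum_sub_distrib, ← Finset.mul_sum, ← Finset.mul_sum]
        ring
    _ ≤ -4 * δ₀ ^ 2 * ∑ i ∈ Finset.Icc (o + 1) n, η i := by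
        nlinarith [mul_le_mul_of_nonneg_left hks (sq_nonneg δ₀)]
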